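/- arXiv:0905.4341 — 5 statements merged into one kernel-verified Lean document; each statement's English description precedes it below -/
import Mathlib

section
/- If a probability measure ρ predicts a probability measure μ in total variation (i.e., sup_{A∈F} |ρ(A|x_{1..n}) − μ(A|x_{1..n})| → 0 μ-almost surely), then μ is absolutely continuous with respect to ρ. -/
open MeasureTheory Filter Set
open scoped ENNReal Topology

/-- The cylinder set `[x_{1..n}]` of all infinite sequences over `X` starting with the word `s`. -/
def cylSet {X : Type*} [MeasurableSpace X] {n : ℕ} (s : Fin n → X) : Set (ℕ → X) :=
  {ω | ∀ i : Fin n, ω (i : ℕ) = s i}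

/-- The probability `μ(x_{1..n})` of the word `s` (cylinder probability), as a real number. -/
noncomputable def cylP {X : Type*} [MeasurableSpace X] (μ : Measure (ℕ → X)) {n : ℕ}
    (s : Fin n → X) : ℝ :=
  (μ (cylSet s)).toReal

/-- Conditional probability `ρ(A | x_{1..n})` given the first `n` values of `ω`. -/
noncomputable def condProb {X : Type*} [MeasurableSpace X] (ρ : Measure (ℕ → X))
    (A : Set (ℕ → X)) (ω : ℕ → X) (n : ℕ) : ℝ :=
  (ρ (A ∩ {ω' | ∀ i < n, ω' i = ω i})).toReal / (ρ {ω' | ∀ i < n, ω' i = ω i}).toReal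

/-- Total variation distance `v(μ,ρ,x_{1..n})` between the conditional measures given `x_{1..n}`:
the supremum over measurable events of the difference of conditional probabilities. -/
noncomputable def tvDist {X : Type*} [MeasurableSpace X] (μ ρ : Measure (ℕ → X))
    (ω : ℕ → X) (n : ℕ) : ℝ :=
  ⨆ A : {A : Set (ℕ → X) // MeasurableSet A}, |condProb ρ A.1 ω n - condProb μ A.1 ω n|

/-- `ρ` predicts `μ` in total variation: `v(μ,ρ,x_{1..n}) → 0` with `μ`-probability 1. -/
def PredictsTV {X : Type*} [MeasurableSpace X] (ρ μ : Measure (ℕ → X)) : Prop :=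
  ∀ᵐ ω ∂μ, Tendsto (fun n => tvDist μ ρ ω n) atTop (𝓝 0)

section aux
variable {X : Type*} [Fintype X] [MeasurableSpace X] [MeasurableSingletonClass X]

lemma cyl_eq (ω : ℕ → X) (n : ℕ) :
    {ω' : ℕ → X | ∀ i < n, ω' i = ω i} = cylSet (fun i : Fin n => ω (i : ℕ)) := by
  ext ω'
  simp only [cylSet, mem_setOf_eq]
  constructor
  · intro hh i; exact hh i i.isLt
  · intro hh i hi; exact hh ⟨i, hi⟩

lemma measurableSet_cylSet {n : ℕ} (s : Fin n → X) : MeasurableSet (cylSet s) := by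
  have : cylSet s = ⋂ i : Fin n, (fun ω : ℕ → X => ω (i : ℕ)) ⁻¹' {s i} := by
    ext ω; simp [cylSet]
  rw [this]
  exact MeasurableSet.iInter fun i => (measurable_pi_apply _) (measurableSet_singleton _)

instance {n : ℕ} : MeasurableSingletonClass (Fin n → X) := ⟨fun s => by
  have : ({s} : Set (Fin n → X)) = ⋂ i, (fun f : Fin n → X => f i) ⁻¹' {s i} := by
    ext f; simp [funext_iff]
  rw [this]
  exact MeasurableSet.iInter fun i => (measurable_pi_apply i) (measurableSet_singleton _)⟩

lemma condProb_nonneg (ρ : Measure (ℕ → X)) (A : Set (ℕ → X)) (ω : ℕ → X) (n : ℕ) :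
    0 ≤ condProb ρ A ω n :=
  div_nonneg ENNReal.toReal_nonneg ENNReal.toReal_nonneg

lemma condProb_le_one (ρ : Measure (ℕ → X)) [IsFiniteMeasure ρ] (A : Set (ℕ → X))
    (ω : ℕ → X) (n : ℕ) : condProb ρ A ω n ≤ 1 :=
  div_le_one_of_le₀ (ENNReal.toReal_mono (measure_ne_top _ _)
    (measure_mono inter_subset_right)) ENNReal.toReal_nonneg

lemma measurable_condProb (μ : Measure (ℕ → X)) (A : Set (ℕ → X)) (n : ℕ) :
    Measurable fun ω => condProb μ A ω n := by
  have h1 : (fun ω : ℕ → X => condProb μ A ω n)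
      = (fun s : Fin n → X => (μ (A ∩ cylSet s)).toReal / (μ (cylSet s)).toReal)
        ∘ (fun ω (i : Fin n) => ω (i : ℕ)) := by
    funext ω
    simp only [condProb, Function.comp, cyl_eq]
  rw [h1]
  exact (measurable_of_countable _).comp (measurable_pi_lambda _ fun i => measurable_pi_apply _)

lemma integral_condProb (μ : Measure (ℕ → X)) [IsFiniteMeasure μ] {A : Set (ℕ → X)}
    (hA : MeasurableSet A) (n : ℕ) :
    ∫ ω, condProb μ A ω n ∂μ = (μ A).toReal := by
  have hfe : (fun ω => condProb μ A ω n)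
      = fun ω => ∑ s : Fin n → X, (cylSet s).indicator
          (fun _ => (μ (A ∩ cylSet s)).toReal / (μ (cylSet s)).toReal) ω := by
    funext ω
    rw [Finset.sum_eq_single (fun i : Fin n => ω (i : ℕ))]
    · rw [indicator_of_mem (by intro i; rfl)]
      simp only [condProb, cyl_eq]
    · intro s _ hs
      refine indicator_of_notMem ?_ _
      intro hmem
      exact hs (funext fun i => (hmem i).symm)
    · intro hx; exact absurd (Finset.mem_univ _) hx
  rw [hfe, integral_finset_sum]
  · have hterm : ∀ s : Fin n → X,
        ∫ ω, (cylSet s).indicator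
          (fun _ => (μ (A ∩ cylSet s)).toReal / (μ (cylSet s)).toReal) ω ∂μ
        = (μ (A ∩ cylSet s)).toReal := by
      intro s
      rw [integral_indicator_const _ (measurableSet_cylSet s)]
      rcases eq_or_ne (μ (cylSet s)) 0 with h0 | h0
      · have : μ (A ∩ cylSet s) = 0 :=
          le_antisymm (h0 ▸ measure_mono inter_subset_right) (zero_le)
        simp [h0, this]
      · rw [smul_eq_mul, mul_comm, measureReal_def, div_mul_cancel₀]
        exact ENNReal.toReal_ne_zero.mpr ⟨h0, measure_ne_top _ _⟩
    simp_rw [hterm]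
    have hpart : μ A = ∑ s : Fin n → X, μ (A ∩ cylSet s) := by
      have hU : (⋃ s : Fin n → X, (A ∩ cylSet s)) = A := by
        ext ω
        simp only [mem_iUnion, mem_inter_iff]
        constructor
        · rintro ⟨s, hs, _⟩; exact hs
        · intro hω; exact ⟨fun i => ω (i : ℕ), hω, fun i => rfl⟩
      have hd : Pairwise (Function.onFun Disjoint fun s : Fin n → X => A ∩ cylSet s) := by
        intro s t hst
        refine disjoint_left.2 fun ω hs ht => hst ?_
        exact funext fun i => (hs.2 i).symm.trans (ht.2 i)
      calc μ A = μ (⋃ s : Fin n → X, (A ∩ cylSet s)) := by rw [hU]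
        _ = ∑ s : Fin n → X, μ (A ∩ cylSet s) := by
            rw [measure_iUnion hd fun s => hA.inter (measurableSet_cylSet s), tsum_fintype]
    rw [hpart, ENNReal.toReal_sum fun s _ => measure_ne_top _ _]
  · intro s _
    exact (integrable_const _).indicator (measurableSet_cylSet s)

end aux


section aux2
variable {X : Type*} [Fintype X] [MeasurableSpace X] [MeasurableSingletonClass X]

lemma abs_le_tvDist (μ ρ : Measure (ℕ → X)) [IsFiniteMeasure μ] [IsFiniteMeasure ρ]
    {A : Set (ℕ → X)} (hA : MeasurableSet A) (ω : ℕ → X) (n : ℕ) :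
    |condProb ρ A ω n - condProb μ A ω n| ≤ tvDist μ ρ ω n := by
  refine le_ciSup (f := fun B : {B : Set (ℕ → X) // MeasurableSet B} =>
    |condProb ρ B.1 ω n - condProb μ B.1 ω n|) ⟨1, ?_⟩ ⟨A, hA⟩
  rintro x ⟨B, rfl⟩
  rw [abs_sub_le_iff]
  constructor
  · linarith [condProb_le_one ρ B.1 ω n, condProb_nonneg μ B.1 ω n]
  · linarith [condProb_le_one μ B.1 ω n, condProb_nonneg ρ B.1 ω n]

end aux2

/-- If `ρ` predicts `μ` in total variation, then `μ` is absolutely continuous w.r.t. `ρ`. -/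
theorem predictsTV_implies_absolutelyContinuous {X : Type*} [Fintype X] [MeasurableSpace X]
    [MeasurableSingletonClass X] (μ ρ : Measure (ℕ → X))
    [IsProbabilityMeasure μ] [IsProbabilityMeasure ρ]
    (h : PredictsTV ρ μ) : μ ≪ ρ := by
  refine Measure.AbsolutelyContinuous.mk fun A hA hρA => ?_
  have hnum : ∀ (ω : ℕ → X) (n : ℕ), condProb ρ A ω n = 0 := by
    intro ω n
    have h0 : ρ (A ∩ {ω' | ∀ i < n, ω' i = ω i}) = 0 :=
      le_antisymm (hρA ▸ measure_mono inter_subset_left) (zero_le)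
    simp [condProb, h0]
  have hconv : ∀ᵐ ω ∂μ, Tendsto (fun n => condProb μ A ω n) atTop (𝓝 0) := by
    filter_upwards [h] with ω hω
    refine squeeze_zero (fun n => condProb_nonneg μ A ω n) (fun n => ?_) hω
    have hle := abs_le_tvDist μ ρ hA ω n
    rwa [hnum, zero_sub, abs_neg, abs_of_nonneg (condProb_nonneg μ A ω n)] at hle
  have hlim : Tendsto (fun n => ∫ ω, condProb μ A ω n ∂μ) atTop (𝓝 0) := by
    have := tendsto_integral_of_dominated_convergence (F := fun n ω => condProb μ A ω n)
      (f := fun _ => (0 : ℝ)) (bound := fun _ => (1 : ℝ)) (μ := μ)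
      (fun n => (measurable_condProb μ A n).aestronglyMeasurable)
      (integrable_const 1)
      (fun n => Eventually.of_forall fun ω => by
        rw [Real.norm_eq_abs, abs_of_nonneg (condProb_nonneg μ A ω n)]
        exact condProb_le_one μ A ω n)
      hconv
    simpa using this
  have heq : ∀ n, ∫ ω, condProb μ A ω n ∂μ = (μ A).toReal := fun n =>
    integral_condProb μ hA n
  have h0 : (μ A).toReal = 0 := by
    have : Tendsto (fun _ : ℕ => (μ A).toReal) atTop (𝓝 0) := by
      simpa [heq] using hlim
    exact tendsto_nhds_unique tendsto_const_nhds this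
  exact (ENNReal.toReal_eq_zero_iff _).mp h0 |>.resolve_right (measure_ne_top μ A)
end

section
/- If μ is absolutely continuous with respect to ρ (measures on X^∞), then ρ predicts μ in total variation: sup_{A∈F} |ρ(A|x_{1..n}) − μ(A|x_{1..n})| → 0 μ-almost surely. -/
open MeasureTheory Filter Set
open scoped ENNReal Topology

set_option linter.unusedSectionVars false
set_option linter.unusedVariables false

namespace BD
variable {X : Type*} [Fintype X] [MeasurableSpace X] [MeasurableSingletonClass X]

/-- projection onto the first `n` coordinates -/
def proj (X : Type*) (n : ℕ) : (ℕ → X) → (Fin n → X) := fun ω i => ω i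

lemma measurable_proj (n : ℕ) : Measurable (proj X n) :=
  measurable_pi_lambda _ fun i => measurable_pi_apply _

/-- the cylinder over a word `w` -/
def cell {X : Type*} (n : ℕ) (w : Fin n → X) : Set (ℕ → X) := proj X n ⁻¹' {w}

lemma cond_set_eq (n : ℕ) (ω : ℕ → X) :
    {ω' : ℕ → X | ∀ i < n, ω' i = ω i} = cell n (proj X n ω) := by
  ext ω'
  simp only [cell, mem_setOf_eq, mem_preimage, mem_singleton_iff, funext_iff, proj]
  exact ⟨fun h i => h i i.2, fun h i hi => h ⟨i, hi⟩⟩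

/-- the filtration generated by the first `n` coordinates -/
def filt (X : Type*) [MeasurableSpace X] :
    Filtration ℕ (MeasurableSpace.pi : MeasurableSpace (ℕ → X)) where
  seq n := MeasurableSpace.comap (proj X n) inferInstance
  mono' := by
    intro m n hmn
    show MeasurableSpace.comap (proj X m) _ ≤ MeasurableSpace.comap (proj X n) _
    have hp : proj X m = (fun (w : Fin n → X) (i : Fin m) => w (Fin.castLE hmn i)) ∘ proj X n :=
      rfl
    rw [hp, ← MeasurableSpace.comap_comp]
    exact MeasurableSpace.comap_mono
      (measurable_pi_lambda _ fun i => measurable_pi_apply _).comap_le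
  le' n := (measurable_pi_lambda _ fun i => measurable_pi_apply _ : Measurable (proj X n)).comap_le

lemma filt_eq (X : Type*) [MeasurableSpace X] (n : ℕ) :
    ((filt X) n : MeasurableSpace (ℕ → X)) = MeasurableSpace.comap (proj X n) inferInstance := rfl


lemma measurable_filt_apply (n : ℕ) (i : ℕ) (hi : i < n) :
    Measurable[filt X n] (fun ω : ℕ → X => ω i) := by
  rw [filt_eq]
  have hp : (fun ω : ℕ → X => ω i) =
      (fun w : Fin n → X => w ⟨i, hi⟩) ∘ proj X n := rfl
  rw [hp]
  exact (measurable_pi_apply _).comp (Measurable.of_comap_le le_rfl)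

lemma iSup_filt : (⨆ n, ((filt X) n : MeasurableSpace (ℕ → X))) = MeasurableSpace.pi := by
  refine le_antisymm (iSup_le fun n => (filt X).le n) ?_
  have hpi : (MeasurableSpace.pi : MeasurableSpace (ℕ → X)) =
      ⨆ i : ℕ, MeasurableSpace.comap (fun ω : ℕ → X => ω i) inferInstance := rfl
  refine le_trans (le_of_eq hpi) (iSup_le fun i => le_trans ?_ (le_iSup _ (i + 1)))
  exact (measurable_filt_apply (i + 1) i (Nat.lt_succ_self i)).comap_le

lemma measurableSet_cell_filt {n : ℕ} (w : Fin n → X) : MeasurableSet[filt X n] (cell n w) := by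
  rw [filt_eq]
  exact MeasurableSpace.measurableSet_comap.mpr ⟨{w}, measurableSet_singleton w, rfl⟩

lemma measurableSet_cell {n : ℕ} (w : Fin n → X) : MeasurableSet (cell n w) :=
  (filt X).le n _ (measurableSet_cell_filt w)

lemma proj_eq_of_mem_cell {m n : ℕ} (hmn : m ≤ n) {x ω : ℕ → X}
    (hx : x ∈ cell n (proj X n ω)) : proj X m x = proj X m ω := by
  have hx' : proj X n x = proj X n ω := hx
  funext i
  exact congrFun hx' (Fin.castLE hmn i)

lemma stronglyMeasurable_comp_proj {n : ℕ} (G : (Fin n → X) → ℝ) :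
    StronglyMeasurable[filt X n] (fun ω => G (proj X n ω)) := by
  rw [filt_eq]
  exact ((measurable_of_countable G).comp (Measurable.of_comap_le le_rfl)).stronglyMeasurable

lemma integrable_comp_proj [Nonempty X] {n : ℕ} (G : (Fin n → X) → ℝ)
    (ρ : Measure (ℕ → X)) [IsFiniteMeasure ρ] :
    Integrable (fun ω => G (proj X n ω)) ρ := by
  classical
  refine (integrable_const (Finset.univ.sup' Finset.univ_nonempty fun w => ‖G w‖)).mono'
    (((stronglyMeasurable_comp_proj G).mono ((filt X).le n)).aestronglyMeasurable) ?_
  exact Eventually.of_forall fun ω =>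
    Finset.le_sup' (fun w => ‖G w‖) (Finset.mem_univ (proj X n ω))


section CondExp
variable [Nonempty X] (ρ : Measure (ℕ → X)) [IsProbabilityMeasure ρ]

/-- explicit conditional expectation given the first `n` coordinates -/
noncomputable def ceF (ρ : Measure (ℕ → X)) (φ : (ℕ → X) → ℝ) (n : ℕ) : (ℕ → X) → ℝ :=
  fun ω => (∫ y in cell n (proj X n ω), φ y ∂ρ) / (ρ (cell n (proj X n ω))).toReal

lemma integrable_ceF (φ : (ℕ → X) → ℝ) (n : ℕ) : Integrable (ceF ρ φ n) ρ :=
  integrable_comp_proj (fun w => (∫ y in cell n w, φ y ∂ρ) / (ρ (cell n w)).toReal) ρ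

lemma stronglyMeasurable_ceF (φ : (ℕ → X) → ℝ) (n : ℕ) :
    StronglyMeasurable[filt X n] (ceF ρ φ n) :=
  stronglyMeasurable_comp_proj fun w => (∫ y in cell n w, φ y ∂ρ) / (ρ (cell n w)).toReal

lemma ceF_nonneg (φ : (ℕ → X) → ℝ) (hφ : 0 ≤ φ) (n : ℕ) (ω : ℕ → X) : 0 ≤ ceF ρ φ n ω :=
  div_nonneg (integral_nonneg hφ) ENNReal.toReal_nonneg

lemma cells_disjoint {n : ℕ} {w w' : Fin n → X} (hne : w ≠ w') :
    Disjoint (cell n w) (cell (X := X) n w') :=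
  Disjoint.preimage _ (disjoint_singleton.mpr hne)

lemma setIntegral_ceF_cell (φ : (ℕ → X) → ℝ) (hφ : Integrable φ ρ) (n : ℕ) (w : Fin n → X) :
    ∫ x in cell n w, ceF ρ φ n x ∂ρ = ∫ x in cell n w, φ x ∂ρ := by
  have hconst : EqOn (ceF ρ φ n)
      (fun _ => (∫ y in cell n w, φ y ∂ρ) / (ρ (cell n w)).toReal) (cell n w) := by
    intro x hx
    have hxw : proj X n x = w := hx
    simp only [ceF, hxw]
  rw [setIntegral_congr_fun (measurableSet_cell w) hconst, setIntegral_const]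
  by_cases hw : ρ (cell n w) = 0
  · rw [hw]
    simp [Measure.restrict_eq_zero.mpr hw]
  · rw [smul_eq_mul, mul_comm, measureReal_def, div_mul_cancel₀]
    exact ENNReal.toReal_ne_zero.mpr ⟨hw, measure_ne_top ρ _⟩

lemma condexp_eq_ceF (φ : (ℕ → X) → ℝ) (hφ : Integrable φ ρ) (n : ℕ) :
    ρ[φ | filt X n] =ᵐ[ρ] ceF ρ φ n := by
  classical
  refine (ae_eq_condExp_of_forall_setIntegral_eq ((filt X).le n) hφ
    (fun s _ _ => (integrable_ceF ρ φ n).integrableOn)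
    (fun s hs _ => ?_)
    (StronglyMeasurable.aestronglyMeasurable (stronglyMeasurable_ceF ρ φ n))).symm
  rw [filt_eq] at hs
  obtain ⟨t, -, rfl⟩ := hs
  have ht : proj X n ⁻¹' t = ⋃ w ∈ t.toFinite.toFinset, cell n w := by
    ext x
    simp only [mem_preimage, Set.mem_iUnion, Set.Finite.mem_toFinset, cell,
      mem_singleton_iff, exists_prop]
    exact ⟨fun hx => ⟨proj X n x, hx, rfl⟩, fun ⟨w, hw, he⟩ => he ▸ hw⟩
  have hdisj : Set.Pairwise (t.toFinite.toFinset : Set (Fin n → X)) (Function.onFun Disjoint (cell n)) :=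
    fun w _ w' _ hne => cells_disjoint hne
  rw [ht,
    integral_biUnion_finset _ (fun w _ => measurableSet_cell w) hdisj
      (fun w _ => (integrable_ceF ρ φ n).integrableOn),
    integral_biUnion_finset _ (fun w _ => measurableSet_cell w) hdisj
      (fun w _ => hφ.integrableOn)]
  exact Finset.sum_congr rfl fun w _ => setIntegral_ceF_cell ρ φ hφ n w

end CondExp

section Mart
variable [Nonempty X] (μ ρ : Measure (ℕ → X)) [IsProbabilityMeasure μ] [IsProbabilityMeasure ρ]

/-- the (real-valued) Radon–Nikodym derivative -/
noncomputable def rn (μ ρ : Measure (ℕ → X)) : (ℕ → X) → ℝ := fun ω => (μ.rnDeriv ρ ω).toReal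

/-- the density martingale: ratio of cylinder probabilities -/
noncomputable def gP (μ ρ : Measure (ℕ → X)) (n : ℕ) : (ℕ → X) → ℝ := fun ω =>
  (μ (cell n (proj X n ω))).toReal / (ρ (cell n (proj X n ω))).toReal

lemma integrable_rn : Integrable (rn μ ρ) ρ := Measure.integrable_toReal_rnDeriv

lemma measurable_rn : Measurable (rn μ ρ) := (Measure.measurable_rnDeriv μ ρ).ennreal_toReal

lemma integrable_gP (n : ℕ) : Integrable (gP μ ρ n) ρ :=
  integrable_comp_proj (fun w => (μ (cell n w)).toReal / (ρ (cell n w)).toReal) ρ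

lemma measurable_gP (n : ℕ) : Measurable (gP μ ρ n) :=
  ((stronglyMeasurable_comp_proj
    (fun w => (μ (cell n w)).toReal / (ρ (cell n w)).toReal)).mono ((filt X).le n)).measurable

lemma gP_eq_of_mem_cell {m n : ℕ} (hmn : m ≤ n) {x ω : ℕ → X}
    (hx : x ∈ cell n (proj X n ω)) : gP μ ρ m x = gP μ ρ m ω := by
  unfold gP
  rw [proj_eq_of_mem_cell hmn hx]

lemma ceF_rn_eq_gP (h : μ ≪ ρ) (n : ℕ) : ceF ρ (rn μ ρ) n = gP μ ρ n := by
  funext ω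
  unfold ceF gP rn
  rw [Measure.setIntegral_toReal_rnDeriv h]
  rfl

/-- the deviation process -/
noncomputable def phi (μ ρ : Measure (ℕ → X)) (m : ℕ) : (ℕ → X) → ℝ := fun x =>
  |rn μ ρ x - gP μ ρ m x|

lemma phi_nonneg (m : ℕ) : 0 ≤ phi μ ρ m := fun x => abs_nonneg _

lemma integrable_phi (m : ℕ) : Integrable (phi μ ρ m) ρ :=
  ((integrable_rn μ ρ).sub (integrable_gP μ ρ m)).abs

lemma measurable_phi (m : ℕ) : Measurable (phi μ ρ m) :=
  ((measurable_rn μ ρ).sub (measurable_gP μ ρ m)).abs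

/-- the key pointwise diagonal bound -/
lemma diag_le {m n : ℕ} (hmn : m ≤ n) (ω : ℕ → X) :
    ceF ρ (phi μ ρ n) n ω ≤ ceF ρ (phi μ ρ m) n ω + |gP μ ρ m ω - gP μ ρ n ω| := by
  set C := cell n (proj X n ω) with hC
  set c := (ρ C).toReal with hc
  by_cases hc0 : ρ C = 0
  · have hres : ρ.restrict C = 0 := Measure.restrict_eq_zero.mpr hc0
    have h1 : ceF ρ (phi μ ρ n) n ω = 0 := by
      unfold ceF; rw [← hC, hres]; simp
    rw [h1]
    have := ceF_nonneg ρ (phi μ ρ m) (phi_nonneg μ ρ m) n ω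
    have := abs_nonneg (gP μ ρ m ω - gP μ ρ n ω)
    linarith
  · have hcpos : 0 < c := ENNReal.toReal_pos hc0 (measure_ne_top ρ _)
    have hpt : ∀ x ∈ C, phi μ ρ n x ≤ phi μ ρ m x + |gP μ ρ m ω - gP μ ρ n ω| := by
      intro x hx
      have e1 : gP μ ρ n x = gP μ ρ n ω := gP_eq_of_mem_cell μ ρ le_rfl hx
      have e2 : gP μ ρ m x = gP μ ρ m ω := gP_eq_of_mem_cell μ ρ hmn hx
      calc phi μ ρ n x ≤ |rn μ ρ x - gP μ ρ m x| + |gP μ ρ m x - gP μ ρ n x| :=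
            abs_sub_le _ _ _
        _ = phi μ ρ m x + |gP μ ρ m ω - gP μ ρ n ω| := by rw [phi, e1, e2]
    have hmono : ∫ x in C, phi μ ρ n x ∂ρ ≤
        ∫ x in C, (phi μ ρ m x + |gP μ ρ m ω - gP μ ρ n ω|) ∂ρ :=
      setIntegral_mono_on ((integrable_phi μ ρ n).integrableOn)
        (((integrable_phi μ ρ m).add (integrable_const _)).integrableOn)
        (measurableSet_cell _) hpt
    rw [integral_add ((integrable_phi μ ρ m).integrableOn) (integrable_const _).integrableOn,
      setIntegral_const, smul_eq_mul] at hmono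
    have h2 : ceF ρ (phi μ ρ n) n ω ≤
        ((∫ x in C, phi μ ρ m x ∂ρ) + c * |gP μ ρ m ω - gP μ ρ n ω|) / c :=
      (div_le_div_iff_of_pos_right hcpos).mpr hmono
    calc ceF ρ (phi μ ρ n) n ω ≤
        ((∫ x in C, phi μ ρ m x ∂ρ) + c * |gP μ ρ m ω - gP μ ρ n ω|) / c := h2
      _ = ceF ρ (phi μ ρ m) n ω + |gP μ ρ m ω - gP μ ρ n ω| := by
          unfold ceF
          rw [← hC, ← hc, add_div, mul_div_cancel_left₀ _ (ne_of_gt hcpos)]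

/-- Lévy upward convergence, packaged -/
lemma levy (φ : (ℕ → X) → ℝ) (hφi : Integrable φ ρ) (hφm : Measurable φ) :
    ∀ᵐ ω ∂ρ, Tendsto (fun n => ceF ρ φ n ω) atTop (𝓝 (φ ω)) := by
  have hsm : StronglyMeasurable[⨆ n, ((filt X) n : MeasurableSpace (ℕ → X))] φ := by
    rw [iSup_filt]
    exact hφm.stronglyMeasurable
  have hlevy := hφi.tendsto_ae_condExp hsm
  have hae : ∀ᵐ ω ∂ρ, ∀ n, (ρ[φ|(filt X) n]) ω = ceF ρ φ n ω :=
    ae_all_iff.mpr fun n => condexp_eq_ceF ρ φ hφi n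
  filter_upwards [hlevy, hae] with ω h1 h2
  have : (fun n => ceF ρ φ n ω) = fun n => (ρ[φ|(filt X) n]) ω := funext fun n => (h2 n).symm
  rw [this]
  exact h1

/-- Lévy convergence of the density martingale -/
lemma gP_tendsto_rn (h : μ ≪ ρ) :
    ∀ᵐ ω ∂ρ, Tendsto (fun n => gP μ ρ n ω) atTop (𝓝 (rn μ ρ ω)) := by
  have := levy ρ (rn μ ρ) (integrable_rn μ ρ) (measurable_rn μ ρ)
  filter_upwards [this] with ω hω
  have hre : (fun n => ceF ρ (rn μ ρ) n ω) = fun n => gP μ ρ n ω := by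
    funext n; rw [ceF_rn_eq_gP μ ρ h]
  rwa [hre] at hω

/-- convergence of the diagonal to zero -/
lemma diag_tendsto_zero (h : μ ≪ ρ) :
    ∀ᵐ ω ∂ρ, Tendsto (fun n => ceF ρ (phi μ ρ n) n ω) atTop (𝓝 0) := by
  have hA := gP_tendsto_rn μ ρ h
  have hB : ∀ᵐ ω ∂ρ, ∀ m, Tendsto (fun n => ceF ρ (phi μ ρ m) n ω) atTop (𝓝 (phi μ ρ m ω)) :=
    ae_all_iff.mpr fun m => levy ρ (phi μ ρ m) (integrable_phi μ ρ m) (measurable_phi μ ρ m)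
  filter_upwards [hA, hB] with ω hA hB
  rw [NormedAddCommGroup.tendsto_nhds_zero]
  intro ε hε
  have hε4 : (0:ℝ) < ε/4 := by linarith
  have h4 : ∀ᶠ n in atTop, |gP μ ρ n ω - rn μ ρ ω| < ε/4 := by
    have := hA.eventually (Metric.ball_mem_nhds (rn μ ρ ω) hε4)
    filter_upwards [this] with n hn
    simpa [Real.dist_eq] using hn
  obtain ⟨m, hm⟩ := h4.exists
  have hphi : phi μ ρ m ω < ε/2 := by
    have : phi μ ρ m ω = |gP μ ρ m ω - rn μ ρ ω| := by rw [phi, abs_sub_comm]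
    rw [this]; linarith
  have h5 : ∀ᶠ n in atTop, ceF ρ (phi μ ρ m) n ω < ε/2 :=
    (hB m).eventually_lt_const hphi
  have h6 : ∀ᶠ n in atTop, |gP μ ρ m ω - gP μ ρ n ω| < ε/2 := by
    have ht : Tendsto (fun n => |gP μ ρ m ω - gP μ ρ n ω|) atTop
        (𝓝 |gP μ ρ m ω - rn μ ρ ω|) := (tendsto_const_nhds.sub hA).abs
    refine ht.eventually_lt_const ?_
    linarith
  filter_upwards [h5, h6, eventually_ge_atTop m] with n h5 h6 h7
  have hd := diag_le μ ρ h7 ω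
  have hnn : 0 ≤ ceF ρ (phi μ ρ n) n ω := ceF_nonneg ρ _ (phi_nonneg μ ρ n) n ω
  rw [Real.norm_eq_abs, abs_of_nonneg hnn]
  linarith

/-- the ρ-cylinder over the first `n` values of `ω` is non-null, μ-a.s. -/
lemma ae_cell_ne_zero : ∀ᵐ ω ∂μ, ∀ n, μ (cell n (proj X n ω)) ≠ 0 := by
  rw [ae_all_iff]
  intro n
  rw [ae_iff]
  refine measure_mono_null (fun ω hω => ?_)
    (measure_iUnion_null (s := fun w : Fin n → X =>
      if μ (cell n w) = 0 then cell n w else (∅ : Set (ℕ → X))) fun w => ?_)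
  · simp only [mem_setOf_eq, not_not] at hω
    refine mem_iUnion.mpr ⟨proj X n ω, ?_⟩
    rw [if_pos hω]
    exact rfl
  · show μ (if μ (cell n w) = 0 then cell n w else ∅) = 0
    split_ifs with hw
    · exact hw
    · exact measure_empty

lemma condProb_nonneg (A : Set (ℕ → X)) (ω : ℕ → X) (n : ℕ) : 0 ≤ condProb ρ A ω n :=
  div_nonneg ENNReal.toReal_nonneg ENNReal.toReal_nonneg

lemma condProb_le_one (A : Set (ℕ → X)) (ω : ℕ → X) (n : ℕ) : condProb ρ A ω n ≤ 1 :=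
  div_le_one_of_le₀
    (ENNReal.toReal_mono (measure_ne_top ρ _) (measure_mono inter_subset_right))
    ENNReal.toReal_nonneg

lemma bddAbove_tv (ω : ℕ → X) (n : ℕ) :
    BddAbove (range fun A : {A : Set (ℕ → X) // MeasurableSet A} =>
      |condProb ρ A.1 ω n - condProb μ A.1 ω n|) := by
  refine ⟨1, fun x hx => ?_⟩
  obtain ⟨A, rfl⟩ := hx
  rw [abs_sub_le_iff]
  constructor
  · have := condProb_le_one ρ A.1 ω n
    have := condProb_nonneg μ A.1 ω n
    linarith
  · have := condProb_le_one μ A.1 ω n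
    have := condProb_nonneg ρ A.1 ω n
    linarith

lemma tvDist_nonneg (ω : ℕ → X) (n : ℕ) : 0 ≤ tvDist μ ρ ω n := by
  have hle := le_ciSup (bddAbove_tv μ ρ ω n) ⟨(∅ : Set (ℕ → X)), MeasurableSet.empty⟩
  refine le_trans ?_ hle
  simp [condProb]

/-- the key total-variation bound -/
lemma tvDist_le (h : μ ≪ ρ) (ω : ℕ → X) (n : ℕ)
    (hμC : μ (cell n (proj X n ω)) ≠ 0) :
    tvDist μ ρ ω n ≤ ceF ρ (phi μ ρ n) n ω / gP μ ρ n ω := by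
  have hρC : ρ (cell n (proj X n ω)) ≠ 0 := fun h0 => hμC (h h0)
  set C := cell n (proj X n ω) with hCdef
  set c := (ρ C).toReal with hcdef
  set a := (μ C).toReal with hadef
  have hcpos : 0 < c := ENNReal.toReal_pos hρC (measure_ne_top ρ _)
  have hapos : 0 < a := ENNReal.toReal_pos hμC (measure_ne_top μ _)
  have hgP : gP μ ρ n ω = a / c := rfl
  refine ciSup_le fun A => ?_
  obtain ⟨A, hA⟩ := A
  have hset : {ω' : ℕ → X | ∀ i < n, ω' i = ω i} = C := cond_set_eq n ω
  rw [condProb, condProb, hset]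
  have hμint : (μ (A ∩ C)).toReal = ∫ x in A ∩ C, rn μ ρ x ∂ρ :=
    (Measure.setIntegral_toReal_rnDeriv h _).symm
  have hρint : (ρ (A ∩ C)).toReal * (a / c) = ∫ x in A ∩ C, gP μ ρ n x ∂ρ := by
    have hconst : EqOn (gP μ ρ n) (fun _ => a / c) (A ∩ C) := fun x hx => by
      have := gP_eq_of_mem_cell μ ρ le_rfl (x := x) (ω := ω) hx.2
      rw [this, hgP]
    rw [setIntegral_congr_fun (hA.inter (measurableSet_cell _)) hconst, setIntegral_const,
      smul_eq_mul, mul_comm]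
    exact mul_comm _ _
  have hsub : (ρ (A ∩ C)).toReal / c - (μ (A ∩ C)).toReal / a
      = (∫ x in A ∩ C, (gP μ ρ n x - rn μ ρ x) ∂ρ) / a := by
    rw [integral_sub ((integrable_gP μ ρ n).integrableOn) ((integrable_rn μ ρ).integrableOn),
      ← hρint, ← hμint]
    field_simp
  rw [hsub]
  have habs : |(∫ x in A ∩ C, (gP μ ρ n x - rn μ ρ x) ∂ρ) / a|
      = |∫ x in A ∩ C, (gP μ ρ n x - rn μ ρ x) ∂ρ| / a := by
    rw [abs_div, abs_of_pos hapos]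
  rw [habs]
  have h1 : |∫ x in A ∩ C, (gP μ ρ n x - rn μ ρ x) ∂ρ|
      ≤ ∫ x in A ∩ C, |gP μ ρ n x - rn μ ρ x| ∂ρ := by
    simpa [Real.norm_eq_abs] using
      norm_integral_le_integral_norm (μ := ρ.restrict (A ∩ C))
        (fun x => gP μ ρ n x - rn μ ρ x)
  have h2 : ∫ x in A ∩ C, |gP μ ρ n x - rn μ ρ x| ∂ρ ≤ ∫ x in C, phi μ ρ n x ∂ρ := by
    have heq : (fun x => |gP μ ρ n x - rn μ ρ x|) = phi μ ρ n := by
      funext x; rw [phi, abs_sub_comm]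
    rw [heq]
    exact setIntegral_mono_set ((integrable_phi μ ρ n).integrableOn)
      (Eventually.of_forall fun x => abs_nonneg _)
      (HasSubset.Subset.eventuallyLE inter_subset_right)
  have h3 : (∫ x in C, phi μ ρ n x ∂ρ) = ceF ρ (phi μ ρ n) n ω * c := by
    rw [ceF, ← hCdef, ← hcdef, div_mul_cancel₀]
    exact ne_of_gt hcpos
  have h4 : ceF ρ (phi μ ρ n) n ω / gP μ ρ n ω = ceF ρ (phi μ ρ n) n ω * c / a := by
    rw [hgP, div_div_eq_mul_div]
  rw [h4]
  have := le_trans h1 h2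
  rw [h3] at this
  exact (div_le_div_iff_of_pos_right hapos).mpr this

end Mart
end BD

/-- Blackwell–Dubins: if `μ ≪ ρ`, then `ρ` predicts `μ` in total variation. -/
theorem absolutelyContinuous_implies_predictsTV {X : Type*} [Fintype X] [MeasurableSpace X]
    [MeasurableSingletonClass X] (μ ρ : Measure (ℕ → X))
    [IsProbabilityMeasure μ] [IsProbabilityMeasure ρ]
    (h : μ ≪ ρ) : PredictsTV ρ μ := by
  cases isEmpty_or_nonempty X with
  | inl hX =>
    exfalso
    haveI : IsEmpty (ℕ → X) := ⟨fun f => hX.false (f 0)⟩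
    have h1 : μ univ = 1 := measure_univ
    rw [eq_empty_of_isEmpty (univ : Set (ℕ → X)), measure_empty] at h1
    exact zero_ne_one h1
  | inr hX =>
    unfold PredictsTV
    have h1 : ∀ᵐ ω ∂μ, Tendsto (fun n => BD.ceF ρ (BD.phi μ ρ n) n ω) atTop (𝓝 0) :=
      (BD.diag_tendsto_zero μ ρ h).filter_mono h.ae_le
    have h2 : ∀ᵐ ω ∂μ, Tendsto (fun n => BD.gP μ ρ n ω) atTop (𝓝 (BD.rn μ ρ ω)) :=
      (BD.gP_tendsto_rn μ ρ h).filter_mono h.ae_le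
    have h3 := BD.ae_cell_ne_zero (μ := μ)
    have h4 : ∀ᵐ ω ∂μ, 0 < BD.rn μ ρ ω := by
      filter_upwards [Measure.rnDeriv_pos h,
        (Measure.rnDeriv_lt_top μ ρ).filter_mono h.ae_le] with ω hp hl
      exact ENNReal.toReal_pos (ne_of_gt hp) (ne_of_lt hl)
    filter_upwards [h1, h2, h3, h4] with ω he hg hcell hpos
    refine squeeze_zero (fun n => BD.tvDist_nonneg μ ρ ω n)
      (fun n => BD.tvDist_le μ ρ h ω n (hcell n)) ?_
    have := he.div hg (ne_of_gt hpos)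
    rw [zero_div] at this
    exact this
end

section
/- Let C be a set of probability measures on X^∞. If there exists a measure ρ such that every μ ∈ C is absolutely continuous with respect to ρ, then there exists a sequence (μ_k)_{k∈ℕ} of elements of C such that for any positive weights w_k summing to 1, every μ ∈ C is absolutely continuous with respect to ν := Σ_k w_k μ_k. -/
open MeasureTheory Filter Set
open scoped ENNReal Topology

/-- Theorem 1 (via Blackwell–Dubins equivalence): if every `μ` in a nonempty class `C` of
probability measures on `X^∞` is absolutely continuous w.r.t. some `ρ`, then there is a sequence
`μ_k ∈ C` such that for any positive weights summing to 1, every `μ ∈ C` is absolutely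
continuous w.r.t. the mixture `ν = Σ_k w_k μ_k`. -/
theorem countable_mixture_dominates {X : Type*} [Fintype X] [MeasurableSpace X]
    [MeasurableSingletonClass X] (C : Set (Measure (ℕ → X))) (hne : C.Nonempty)
    (hC : ∀ μ ∈ C, IsProbabilityMeasure μ)
    (ρ : Measure (ℕ → X)) [IsProbabilityMeasure ρ] (hdom : ∀ μ ∈ C, μ ≪ ρ) :
    ∃ μk : ℕ → Measure (ℕ → X), (∀ k, μk k ∈ C) ∧
      ∀ w : ℕ → ℝ≥0∞, (∀ k, 0 < w k) → (∑' k, w k) = 1 →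
        ∀ μ ∈ C, μ ≪ Measure.sum (fun k => w k • μk k) := by
  classical
  haveI : Fact ((1:ℝ≥0∞) ≤ 1) := ⟨le_rfl⟩
  haveI : Fact ((1:ℝ≥0∞) ≠ ⊤) := ⟨ENNReal.one_ne_top⟩
  set f : Measure (ℕ → X) → (ℕ → X) → ℝ := fun μ x => (μ.rnDeriv ρ x).toReal with hfdef
  have hint : ∀ μ ∈ C, Integrable (f μ) ρ := by
    intro μ hμ
    haveI := hC μ hμ
    exact Measure.integrable_toReal_rnDeriv
  set F : Measure (ℕ → X) → Lp ℝ 1 ρ := fun μ =>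
    if h : Integrable (f μ) ρ then (memLp_one_iff_integrable.2 h).toLp (f μ) else 0 with hFdef
  have hFcoe : ∀ μ ∈ C, (F μ : (ℕ → X) → ℝ) =ᵐ[ρ] f μ := by
    intro μ hμ
    simp only [hFdef, dif_pos (hint μ hμ)]
    exact (memLp_one_iff_integrable.2 (hint μ hμ)).coeFn_toLp
  obtain ⟨T, hTS, hTc, hTd⟩ :=
    (TopologicalSpace.IsSeparable.of_separableSpace (F '' C)).exists_countable_dense_subset
  have hTne : T.Nonempty := by
    rcases hne with ⟨μ0, hμ0⟩
    have h0 : F μ0 ∈ closure T := hTd ⟨μ0, hμ0, rfl⟩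
    exact closure_nonempty_iff.1 ⟨_, h0⟩
  obtain ⟨t, ht⟩ := hTc.exists_eq_range hTne
  have hts : ∀ n, ∃ μ, μ ∈ C ∧ F μ = t n := by
    intro n
    have htn : t n ∈ T := ht ▸ mem_range_self n
    rcases hTS htn with ⟨μ, hμ, hFμ⟩
    exact ⟨μ, hμ, hFμ⟩
  choose μk hμkC hμkF using hts
  refine ⟨μk, hμkC, ?_⟩
  intro w hw _hw1 μ hμ
  haveI := hC μ hμ
  refine Measure.AbsolutelyContinuous.mk ?_
  intro A hA hνA
  -- each μk k vanishes on A
  have hk0 : ∀ k, μk k A = 0 := by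
    intro k
    rw [Measure.sum_apply _ hA] at hνA
    have h1 : w k * μk k A = 0 := by
      have := (ENNReal.tsum_eq_zero.1 hνA) k
      simpa [Measure.smul_apply, smul_eq_mul] using this
    rcases mul_eq_zero.1 h1 with h | h
    · exact absurd h (hw k).ne'
    · exact h
  -- set integrals of the densities of μk over A vanish
  have hInt0 : ∀ n, ∫ x in A, (t n : (ℕ → X) → ℝ) x ∂ρ = 0 := by
    intro n
    haveI := hC _ (hμkC n)
    have hc : ((t n : Lp ℝ 1 ρ) : (ℕ → X) → ℝ) =ᵐ[ρ] f (μk n) := by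
      rw [← hμkF n]; exact hFcoe _ (hμkC n)
    calc ∫ x in A, (t n : (ℕ → X) → ℝ) x ∂ρ
        = ∫ x in A, f (μk n) x ∂ρ := integral_congr_ae (ae_restrict_of_ae hc)
      _ = (μk n A).toReal :=
          Measure.setIntegral_toReal_rnDeriv (hdom _ (hμkC n)) A
      _ = 0 := by rw [hk0 n]; simp
  -- approximate F μ by elements of the range of t
  have hmem : F μ ∈ closure T := hTd ⟨μ, hμ, rfl⟩
  rw [ht] at hmem
  obtain ⟨u, hu_mem, hu_lim⟩ := mem_closure_iff_seq_limit.1 hmem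
  choose φ hφ using fun n => Set.mem_range.1 (hu_mem n)
  have hIu0 : ∀ n, ∫ x in A, (u n : (ℕ → X) → ℝ) x ∂ρ = 0 := by
    intro n; rw [← hφ n]; exact hInt0 (φ n)
  -- the key estimate
  have hbound : ∀ n, |∫ x in A, (F μ : (ℕ → X) → ℝ) x ∂ρ| ≤ dist (u n) (F μ) := by
    intro n
    have hiF : Integrable (F μ : (ℕ → X) → ℝ) ρ := L1.integrable_coeFn (F μ)
    have hiu : Integrable (u n : (ℕ → X) → ℝ) ρ := L1.integrable_coeFn (u n)
    have hsub : ((F μ - u n : Lp ℝ 1 ρ) : (ℕ → X) → ℝ)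
        =ᵐ[ρ] fun x => (F μ : (ℕ → X) → ℝ) x - (u n : (ℕ → X) → ℝ) x :=
      Lp.coeFn_sub _ _
    have h1 : ∫ x in A, (F μ : (ℕ → X) → ℝ) x ∂ρ
        = ∫ x in A, ((F μ - u n : Lp ℝ 1 ρ) : (ℕ → X) → ℝ) x ∂ρ := by
      rw [integral_congr_ae (ae_restrict_of_ae hsub),
        integral_sub (hiF.integrableOn) (hiu.integrableOn), hIu0 n, sub_zero]
    rw [h1]
    calc |∫ x in A, ((F μ - u n : Lp ℝ 1 ρ) : (ℕ → X) → ℝ) x ∂ρ|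
        ≤ ∫ x in A, ‖((F μ - u n : Lp ℝ 1 ρ) : (ℕ → X) → ℝ) x‖ ∂ρ := by
          rw [← Real.norm_eq_abs]; exact norm_integral_le_integral_norm _
      _ ≤ ∫ x, ‖((F μ - u n : Lp ℝ 1 ρ) : (ℕ → X) → ℝ) x‖ ∂ρ :=
          setIntegral_le_integral ((L1.integrable_coeFn _).norm)
            (Eventually.of_forall fun x => norm_nonneg _)
      _ = ‖F μ - u n‖ := (L1.norm_eq_integral_norm _).symm
      _ = dist (u n) (F μ) := by rw [dist_eq_norm, ← norm_neg (u n - F μ), neg_sub]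
  have hd0 : Tendsto (fun n => dist (u n) (F μ)) atTop (𝓝 0) :=
    tendsto_iff_dist_tendsto_zero.1 hu_lim
  have habs : |∫ x in A, (F μ : (ℕ → X) → ℝ) x ∂ρ| ≤ 0 :=
    ge_of_tendsto hd0 (Eventually.of_forall hbound)
  have hFA : ∫ x in A, (F μ : (ℕ → X) → ℝ) x ∂ρ = 0 :=
    abs_nonpos_iff.1 habs
  have hμA : (μ A).toReal = 0 := by
    change μ.real A = 0
    rw [← Measure.setIntegral_toReal_rnDeriv (hdom μ hμ) A]
    rw [← integral_congr_ae (ae_restrict_of_ae (hFcoe μ hμ))]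
    exact hFA
  exact (ENNReal.toReal_eq_zero_iff _).1 hμA |>.resolve_right (measure_ne_top μ A)
end

section
/- For probability measures μ, ρ on X^∞ and any ε ∈ (0,1): if μ(T^n_μ \ S) > ε' for infinitely many n where S is chosen with ρ(T^n_μ \ S) ≤ ε_n and −log ε_n = o(n) is suitably chosen, then d_n(μ,ρ) ≠ o(n). Equivalently (contrapositive form): if d_n(μ,ρ) = o(n), then one can choose ε_n with −log ε_n = o(n) such that whenever ρ(T^n_μ \ S_n) ≤ ε_n, it follows that μ(T^n_μ \ S_n) → 0. -/
open MeasureTheory Filter Set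
open scoped ENNReal Topology

open scoped Classical in
/-- The `n`-step Kullback-Leibler divergence `d_n(μ,ρ)` between the restrictions of `μ` and `ρ`
to the first `n` observations, with the convention that terms with `μ(x_{1..n}) = 0` vanish. -/
noncomputable def klDn {X : Type*} [Fintype X] [MeasurableSpace X]
    (μ ρ : Measure (ℕ → X)) (n : ℕ) : ℝ :=
  ∑ s : Fin n → X, if cylP μ s = 0 then 0 else cylP μ s * Real.log (cylP μ s / cylP ρ s)

section Aux

variable {X : Type*} [Fintype X] [MeasurableSpace X] [MeasurableSingletonClass X]

lemma cylP_nonneg (μ : Measure (ℕ → X)) {n : ℕ} (s : Fin n → X) : 0 ≤ cylP μ s :=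
  ENNReal.toReal_nonneg

lemma cylSet_disjoint {n : ℕ} {s t : Fin n → X} (h : s ≠ t) :
    Disjoint (cylSet s) (cylSet t) := by
  rw [Set.disjoint_left]
  intro ω hs ht
  obtain ⟨i, hi⟩ := Function.ne_iff.mp h
  exact hi ((hs i).symm.trans (ht i))

lemma sum_cylP_le_one (ρ : Measure (ℕ → X)) [IsProbabilityMeasure ρ] (n : ℕ) :
    ∑ s : Fin n → X, cylP ρ s ≤ 1 := by
  have h1 : (∑ s : Fin n → X, ρ (cylSet s)) ≤ 1 := by
    have := sum_measure_le_measure_univ (μ := ρ) (s := Finset.univ)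
      (t := fun s : Fin n → X => cylSet s)
      (fun i _ => (measurableSet_cylSet i).nullMeasurableSet)
      (fun i _ j _ hij => (cylSet_disjoint hij).aedisjoint)
    simpa using this
  have h2 : ∑ s : Fin n → X, cylP ρ s = (∑ s : Fin n → X, ρ (cylSet s)).toReal := by
    rw [ENNReal.toReal_sum fun s _ => measure_ne_top ρ _]
    rfl
  rw [h2]
  have := ENNReal.toReal_mono ENNReal.one_ne_top h1
  simpa using this

end Aux

open scoped Classical in
/-- Key quantitative step of Theorem 2: if `d_n(μ,ρ) = o(n)`, then one can choose
`ε_n ∈ (0,1)` with `−log ε_n = o(n)` such that for any sets `S_n ⊆ X^n`, whenever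
`ρ(T_μ^n \ S_n) ≤ ε_n` for all `n`, it follows that `μ(T_μ^n \ S_n) → 0`. -/
theorem exists_eps_mu_T_minus_S_tendsto_zero {X : Type*} [Fintype X] [Nonempty X]
    [MeasurableSpace X] [MeasurableSingletonClass X] (μ ρ : Measure (ℕ → X))
    [IsProbabilityMeasure μ] [IsProbabilityMeasure ρ]
    (hac : ∀ (n : ℕ) (s : Fin n → X), cylP ρ s = 0 → cylP μ s = 0)
    (hd : Tendsto (fun n => klDn μ ρ n / n) atTop (𝓝 0)) :
    ∃ ε : ℕ → ℝ, (∀ n, ε n ∈ Set.Ioo (0 : ℝ) 1) ∧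
      Tendsto (fun n => -Real.log (ε n) / n) atTop (𝓝 0) ∧
      ∀ S : (n : ℕ) → Finset (Fin n → X),
        (∀ n, ∑ s ∈ (Finset.univ.filter
            (fun s : Fin n → X => (1 / (n : ℝ)) * cylP ρ s ≤ cylP μ s)) \ S n, cylP ρ s ≤ ε n) →
        Tendsto (fun n => ∑ s ∈ (Finset.univ.filter
            (fun s : Fin n → X => (1 / (n : ℝ)) * cylP ρ s ≤ cylP μ s)) \ S n, cylP μ s)
          atTop (𝓝 0) := by
  classical
  set a : ℕ → ℝ := fun n => max (klDn μ ρ n) 0 with ha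
  set L : ℕ → ℝ := fun n => Real.sqrt (n * (a n + 1)) with hLdef
  have ha0 : ∀ n, 0 ≤ a n := fun n => le_max_right _ _
  have hL0 : ∀ n, 0 ≤ L n := fun n => Real.sqrt_nonneg _
  have hL1 : ∀ n : ℕ, 1 ≤ n → 1 ≤ L n := by
    intro n hn
    have h1 : (1:ℝ) ≤ (n:ℝ) := by exact_mod_cast hn
    have h2 : (1:ℝ) ≤ (n:ℝ) * (a n + 1) := by nlinarith [ha0 n]
    calc (1:ℝ) = Real.sqrt 1 := Real.sqrt_one.symm
      _ ≤ L n := Real.sqrt_le_sqrt h2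
  -- the eventual tendsto of `(a n + 1)/n` and its sqrt
  have hmax : Tendsto (fun n : ℕ => max (klDn μ ρ n / n) 0) atTop (𝓝 0) := by
    have := hd.max (tendsto_const_nhds (x := (0:ℝ)) (f := atTop))
    simpa using this
  have han : Tendsto (fun n : ℕ => a n / n) atTop (𝓝 0) := by
    refine hmax.congr' ?_
    filter_upwards [eventually_ge_atTop 1] with n hn
    have hnpos : (0:ℝ) < n := by exact_mod_cast hn
    rw [ha]
    simp only
    rw [← max_div_div_right hnpos.le, zero_div]
  have hinv : Tendsto (fun n : ℕ => ((n:ℝ))⁻¹) atTop (𝓝 0) :=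
    tendsto_inv_atTop_zero.comp tendsto_natCast_atTop_atTop
  have han1 : Tendsto (fun n : ℕ => (a n + 1) / n) atTop (𝓝 0) := by
    have := han.add hinv
    simp only [add_zero] at this
    refine this.congr fun n => ?_
    rw [add_div, one_div]
  have hsq : Tendsto (fun n : ℕ => Real.sqrt ((a n + 1) / n)) atTop (𝓝 0) := by
    have := han1.sqrt
    simpa using this
  -- (a n + 1)/L n = sqrt ((a n + 1)/n) for n ≥ 1
  have hLsqrt : ∀ n : ℕ, 1 ≤ n → (a n + 1) / L n = Real.sqrt ((a n + 1) / n) := by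
    intro n hn
    have hnpos : (0:ℝ) < n := by exact_mod_cast hn
    have ha1 : (0:ℝ) < a n + 1 := by linarith [ha0 n]
    rw [hLdef]
    simp only
    rw [show (a n + 1) = Real.sqrt ((a n + 1) ^ 2) by rw [Real.sqrt_sq ha1.le]]
    rw [← Real.sqrt_div (sq_nonneg _)]
    congr 1
    field_simp
    ring_nf
    rw [Real.sq_sqrt (by nlinarith [ha0 n])]
  have hL_div : Tendsto (fun n : ℕ => L n / n) atTop (𝓝 0) := by
    refine hsq.congr' ?_
    filter_upwards [eventually_ge_atTop 1] with n hn
    have hnpos : (0:ℝ) < n := by exact_mod_cast hn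
    have ha1 : (0:ℝ) < a n + 1 := by linarith [ha0 n]
    rw [hLdef]
    simp only
    rw [show (n:ℝ) = Real.sqrt ((n:ℝ) ^ 2) by rw [Real.sqrt_sq hnpos.le]]
    rw [← Real.sqrt_div (by positivity)]
    congr 1
    field_simp
    ring_nf
    rw [Real.sq_sqrt (by positivity)]
  -- log (n+2) / n → 0
  have hlogn : Tendsto (fun n : ℕ => Real.log ((n:ℝ) + 2) / n) atTop (𝓝 0) := by
    have h1 : Tendsto (fun n : ℕ => (n:ℝ) + 2) atTop atTop :=
      tendsto_atTop_add_const_right _ 2 tendsto_natCast_atTop_atTop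
    have h2 : (fun n : ℕ => Real.log ((n:ℝ) + 2)) =o[atTop] fun n : ℕ => (n:ℝ) + 2 :=
      Real.isLittleO_log_id_atTop.comp_tendsto h1
    have h3 : (fun n : ℕ => (n:ℝ) + 2) =O[atTop] fun n : ℕ => (n:ℝ) := by
      rw [Asymptotics.isBigO_iff]
      refine ⟨3, ?_⟩
      filter_upwards [eventually_ge_atTop 1] with n hn
      have : (1:ℝ) ≤ n := by exact_mod_cast hn
      rw [Real.norm_eq_abs, Real.norm_eq_abs, abs_of_nonneg (by linarith),
        abs_of_nonneg (by linarith)]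
      linarith
    exact (h2.trans_isBigO h3).tendsto_div_nhds_zero
  have hinv2 : Tendsto (fun n : ℕ => ((n:ℝ) + 2)⁻¹) atTop (𝓝 0) :=
    tendsto_inv_atTop_zero.comp
      (tendsto_atTop_add_const_right _ 2 tendsto_natCast_atTop_atTop)
  refine ⟨fun n => Real.exp (-(L n + Real.log ((n:ℝ) + 2))), ?_, ?_, ?_⟩
  · -- ε n ∈ (0,1)
    intro n
    constructor
    · exact Real.exp_pos _
    · rw [Real.exp_lt_one_iff]
      have hlog2 : (0:ℝ) < Real.log ((n:ℝ) + 2) := Real.log_pos (by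
        have : (0:ℝ) ≤ (n:ℝ) := Nat.cast_nonneg n
        linarith)
      linarith [hL0 n]
  · -- -log ε n / n → 0
    have heq : (fun n : ℕ => -Real.log (Real.exp (-(L n + Real.log ((n:ℝ) + 2)))) / n)
        = fun n : ℕ => L n / n + Real.log ((n:ℝ) + 2) / n := by
      funext n
      rw [Real.log_exp, neg_neg, add_div]
    rw [heq]
    have := hL_div.add hlogn
    simpa using this
  · -- main part
    intro S hS
    have hnonneg : ∀ n : ℕ, 0 ≤ ∑ s ∈ (Finset.univ.filter
        (fun s : Fin n → X => (1 / (n : ℝ)) * cylP ρ s ≤ cylP μ s)) \ S n, cylP μ s :=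
      fun n => Finset.sum_nonneg fun s _ => cylP_nonneg μ s
    have hg : Tendsto (fun n : ℕ => Real.sqrt ((a n + 1) / n) + ((n:ℝ) + 2)⁻¹)
        atTop (𝓝 0) := by
      have := hsq.add hinv2
      simpa using this
    refine tendsto_of_tendsto_of_tendsto_of_le_of_le' tendsto_const_nhds hg
      (Eventually.of_forall hnonneg) ?_
    filter_upwards [eventually_ge_atTop 1] with n hn
    have hnpos : (0:ℝ) < n := by exact_mod_cast hn
    have hLpos : (0:ℝ) < L n := lt_of_lt_of_le one_pos (hL1 n hn)
    set F : Finset (Fin n → X) := (Finset.univ.filter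
      (fun s : Fin n → X => (1 / (n : ℝ)) * cylP ρ s ≤ cylP μ s)) \ S n with hF
    set B : Finset (Fin n → X) :=
      F.filter (fun s => Real.exp (L n) * cylP ρ s ≤ cylP μ s) with hB
    have hBF : B ⊆ F := Finset.filter_subset _ _
    -- Step 1 : sum over F \ B
    have hFB : ∑ s ∈ F \ B, cylP μ s ≤ ((n:ℝ) + 2)⁻¹ := by
      have h1 : ∑ s ∈ F \ B, cylP μ s ≤ ∑ s ∈ F \ B, Real.exp (L n) * cylP ρ s := by
        refine Finset.sum_le_sum fun s hs => ?_
        rcases Finset.mem_sdiff.mp hs with ⟨hsF, hsB⟩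
        have : ¬ (Real.exp (L n) * cylP ρ s ≤ cylP μ s) := by
          intro hcon
          exact hsB (Finset.mem_filter.mpr ⟨hsF, hcon⟩)
        linarith [not_le.mp this]
      have h2 : ∑ s ∈ F \ B, Real.exp (L n) * cylP ρ s
          ≤ Real.exp (L n) * ∑ s ∈ F, cylP ρ s := by
        rw [← Finset.mul_sum]
        refine mul_le_mul_of_nonneg_left ?_ (Real.exp_nonneg _)
        refine Finset.sum_le_sum_of_subset_of_nonneg (Finset.sdiff_subset) ?_
        intro s _ _
        exact cylP_nonneg ρ s
      have h3 : Real.exp (L n) * ∑ s ∈ F, cylP ρ s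
          ≤ Real.exp (L n) * Real.exp (-(L n + Real.log ((n:ℝ) + 2))) :=
        mul_le_mul_of_nonneg_left (hS n) (Real.exp_nonneg _)
      have h4 : Real.exp (L n) * Real.exp (-(L n + Real.log ((n:ℝ) + 2)))
          = ((n:ℝ) + 2)⁻¹ := by
        rw [← Real.exp_add]
        have : L n + -(L n + Real.log ((n:ℝ) + 2)) = -Real.log ((n:ℝ) + 2) := by ring
        rw [this, Real.exp_neg, Real.exp_log (by positivity)]
      linarith
    -- Step 2 : sum over B
    have hBsum : ∑ s ∈ B, cylP μ s ≤ (a n + 1) / L n := by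
      have hkey : L n * ∑ s ∈ B, cylP μ s ≤ klDn μ ρ n + 1 := by
        have hterm : klDn μ ρ n = ∑ s ∈ (Finset.univ : Finset (Fin n → X)) \ B,
            (if cylP μ s = 0 then 0 else cylP μ s * Real.log (cylP μ s / cylP ρ s))
            + ∑ s ∈ B,
            (if cylP μ s = 0 then 0 else cylP μ s * Real.log (cylP μ s / cylP ρ s)) := by
          rw [klDn, Finset.sum_sdiff (Finset.subset_univ B)]
        have hBterm : ∀ s ∈ B, L n * cylP μ s
            ≤ (if cylP μ s = 0 then 0 else cylP μ s * Real.log (cylP μ s / cylP ρ s)) := by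
          intro s hs
          by_cases hμ : cylP μ s = 0
          · rw [if_pos hμ, hμ, mul_zero]
          · rw [if_neg hμ]
            have hμpos : 0 < cylP μ s := lt_of_le_of_ne (cylP_nonneg μ s) (Ne.symm hμ)
            have hρpos : 0 < cylP ρ s := by
              rcases lt_or_eq_of_le (cylP_nonneg ρ s) with h | h
              · exact h
              · exact absurd (hac n s h.symm) hμ
            have hmem := (Finset.mem_filter.mp hs).2
            have hdiv : Real.exp (L n) ≤ cylP μ s / cylP ρ s :=
              (le_div_iff₀ hρpos).mpr (by linarith [hmem])
            have hlog : L n ≤ Real.log (cylP μ s / cylP ρ s) := by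
              calc L n = Real.log (Real.exp (L n)) := (Real.log_exp _).symm
                _ ≤ _ := Real.log_le_log (Real.exp_pos _) hdiv
            calc L n * cylP μ s ≤ Real.log (cylP μ s / cylP ρ s) * cylP μ s :=
                  mul_le_mul_of_nonneg_right hlog hμpos.le
              _ = cylP μ s * Real.log (cylP μ s / cylP ρ s) := mul_comm _ _
        have hCterm : ∀ s ∈ (Finset.univ : Finset (Fin n → X)) \ B,
            cylP μ s - cylP ρ s
            ≤ (if cylP μ s = 0 then 0 else cylP μ s * Real.log (cylP μ s / cylP ρ s)) := by
          intro s _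
          by_cases hμ : cylP μ s = 0
          · rw [if_pos hμ, hμ]
            linarith [cylP_nonneg ρ s]
          · rw [if_neg hμ]
            have hμpos : 0 < cylP μ s := lt_of_le_of_ne (cylP_nonneg μ s) (Ne.symm hμ)
            have hρpos : 0 < cylP ρ s := by
              rcases lt_or_eq_of_le (cylP_nonneg ρ s) with h | h
              · exact h
              · exact absurd (hac n s h.symm) hμ
            have h1 : Real.log (cylP ρ s / cylP μ s) ≤ cylP ρ s / cylP μ s - 1 :=
              Real.log_le_sub_one_of_pos (div_pos hρpos hμpos)
            have hloginv : Real.log (cylP μ s / cylP ρ s)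
                = -Real.log (cylP ρ s / cylP μ s) := by
              rw [← Real.log_inv, inv_div]
            have h2 : 1 - cylP ρ s / cylP μ s ≤ Real.log (cylP μ s / cylP ρ s) := by
              rw [hloginv]; linarith
            have h3 := mul_le_mul_of_nonneg_left h2 hμpos.le
            have h4 : cylP μ s * (1 - cylP ρ s / cylP μ s) = cylP μ s - cylP ρ s := by
              field_simp
            linarith
        have hsum1 : L n * ∑ s ∈ B, cylP μ s ≤ ∑ s ∈ B,
            (if cylP μ s = 0 then 0 else cylP μ s * Real.log (cylP μ s / cylP ρ s)) := by
          rw [Finset.mul_sum]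
          exact Finset.sum_le_sum hBterm
        have hsum2 : ∑ s ∈ (Finset.univ : Finset (Fin n → X)) \ B, (cylP μ s - cylP ρ s)
            ≤ ∑ s ∈ (Finset.univ : Finset (Fin n → X)) \ B,
            (if cylP μ s = 0 then 0 else cylP μ s * Real.log (cylP μ s / cylP ρ s)) :=
          Finset.sum_le_sum hCterm
        have hsum3 : (-1 : ℝ) ≤ ∑ s ∈ (Finset.univ : Finset (Fin n → X)) \ B,
            (cylP μ s - cylP ρ s) := by
          rw [Finset.sum_sub_distrib]
          have hμ0 : (0:ℝ) ≤ ∑ s ∈ (Finset.univ : Finset (Fin n → X)) \ B, cylP μ s :=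
            Finset.sum_nonneg fun s _ => cylP_nonneg μ s
          have hρ1 : ∑ s ∈ (Finset.univ : Finset (Fin n → X)) \ B, cylP ρ s ≤ 1 := by
            calc ∑ s ∈ (Finset.univ : Finset (Fin n → X)) \ B, cylP ρ s
                ≤ ∑ s : Fin n → X, cylP ρ s :=
                  Finset.sum_le_sum_of_subset_of_nonneg (Finset.subset_univ _)
                    fun s _ _ => cylP_nonneg ρ s
              _ ≤ 1 := sum_cylP_le_one ρ n
          linarith
        linarith [hterm, hsum1, hsum2, hsum3]
      have hka : klDn μ ρ n ≤ a n := le_max_left _ _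
      rw [le_div_iff₀ hLpos]
      calc (∑ s ∈ B, cylP μ s) * L n = L n * ∑ s ∈ B, cylP μ s := mul_comm _ _
        _ ≤ klDn μ ρ n + 1 := hkey
        _ ≤ a n + 1 := by linarith
    -- combine
    have hsplit : ∑ s ∈ F, cylP μ s = ∑ s ∈ F \ B, cylP μ s + ∑ s ∈ B, cylP μ s :=
      (Finset.sum_sdiff hBF).symm
    calc ∑ s ∈ F, cylP μ s = ∑ s ∈ F \ B, cylP μ s + ∑ s ∈ B, cylP μ s := hsplit
      _ ≤ ((n:ℝ) + 2)⁻¹ + (a n + 1) / L n := add_le_add hFB hBsum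
      _ = Real.sqrt ((a n + 1) / n) + ((n:ℝ) + 2)⁻¹ := by
          rw [hLsqrt n hn]; ring
end

section
/- Let γ' := Σ_{n∈ℕ} w_n γ'_n where w_n = (6/π²)n^{−2} and γ'_n := (1/|A_n|) Σ_{x_{1..n}∈A_n} μ_{x_{1..n}}, with A_n := { x_{1..n} ∈ X^n : ∃μ∈C, μ(x_{1..n}) ≠ 0 } and μ_{x_{1..n}} ∈ C a measure maximizing μ(x_{1..n}) over μ ∈ C. Then for every μ ∈ C, every n, and every x_{1..n} with μ(x_{1..n}) > 0: γ'(x_{1..n}) ≥ w_n |X|^{−n} μ(x_{1..n}). -/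
open MeasureTheory Filter Set
open scoped ENNReal Topology

/-- Step r of the proof of Theorem 2: the regularizer `γ' = Σ_n w_n γ'_n`, where
`w_n = (6/π²)n⁻²` and `γ'_n` is the uniform average over `A_n` of the maximizers
`μ_{x_{1..n}}`, satisfies `γ'(x_{1..n}) ≥ w_n |X|^{−n} μ(x_{1..n})` for every `μ ∈ C`
and every word with positive `μ`-probability. -/
theorem regularizer_lower_bound {X : Type*} [Fintype X] [MeasurableSpace X]
    [MeasurableSingletonClass X] (C : Set (Measure (ℕ → X)))
    (hC : ∀ μ ∈ C, IsProbabilityMeasure μ)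
    (m : (n : ℕ) → (Fin n → X) → Measure (ℕ → X))
    (hm : ∀ (n : ℕ) (s : Fin n → X), m n s ∈ C)
    (hmax : ∀ (n : ℕ) (s : Fin n → X), ∀ μ ∈ C, cylP μ s ≤ cylP (m n s) s)
    (A : (n : ℕ) → Finset (Fin n → X))
    (hA : ∀ (n : ℕ) (s : Fin n → X), s ∈ A n ↔ ∃ μ ∈ C, cylP μ s ≠ 0)
    (γ : Measure (ℕ → X))
    (hγ : γ = Measure.sum fun n : ℕ =>
      ENNReal.ofReal (6 / Real.pi ^ 2 * ((n : ℝ) ^ 2)⁻¹) •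
        (((A n).card : ℝ≥0∞)⁻¹ • ∑ s ∈ A n, m n s)) :
    ∀ μ ∈ C, ∀ (n : ℕ) (s : Fin n → X), 0 < cylP μ s →
      6 / Real.pi ^ 2 * ((n : ℝ) ^ 2)⁻¹ * ((Fintype.card X : ℝ) ^ n)⁻¹ * cylP μ s
        ≤ cylP γ s := by
  intro μ hμ n s hs
  have hPμ := hC μ hμ
  have hPm := hC _ (hm n s)
  rcases Nat.eq_zero_or_pos n with rfl | hn
  · simp only [Nat.cast_zero, ne_eq, OfNat.ofNat_ne_zero, not_false_eq_true, zero_pow,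
      inv_zero, mul_zero, zero_mul]
    exact ENNReal.toReal_nonneg
  have hXne : Nonempty X := ⟨s ⟨0, hn⟩⟩
  have hcardX : 0 < Fintype.card X := Fintype.card_pos
  set w : ℝ≥0∞ := ENNReal.ofReal (6 / Real.pi ^ 2 * ((n : ℝ) ^ 2)⁻¹) with hw
  have hwnn : (0:ℝ) ≤ 6 / Real.pi ^ 2 * ((n : ℝ) ^ 2)⁻¹ := by positivity
  have hsA : s ∈ A n := (hA n s).mpr ⟨μ, hμ, ne_of_gt hs⟩
  have hcardA : (A n).card ≤ Fintype.card X ^ n := by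
    have := Finset.card_le_univ (A n)
    simpa [Fintype.card_fun] using this
  -- γ is finite on every set
  have hwk_nonneg : ∀ k : ℕ, (0:ℝ) ≤ 6 / Real.pi ^ 2 * ((k : ℝ) ^ 2)⁻¹ := fun k => by positivity
  have hsum : Summable (fun k : ℕ => 6 / Real.pi ^ 2 * ((k : ℝ) ^ 2)⁻¹) := by
    have h2 : Summable (fun k : ℕ => ((k : ℝ) ^ 2)⁻¹) := by
      simpa using Real.summable_nat_rpow_inv.mpr (by norm_num : (1:ℝ) < 2)
    exact h2.mul_left _
  have hγtop : γ (cylSet s) ≠ ∞ := by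
    have huniv : γ Set.univ ≤ ∑' k : ℕ, ENNReal.ofReal (6 / Real.pi ^ 2 * ((k : ℝ) ^ 2)⁻¹) := by
      rw [hγ, Measure.sum_apply _ MeasurableSet.univ]
      refine ENNReal.tsum_le_tsum fun k => ?_
      have hPk : ∀ t ∈ A k, (m k t) Set.univ = 1 := fun t _ => (hC _ (hm k t)).measure_univ
      simp only [Measure.smul_apply, smul_eq_mul, Measure.coe_finset_sum, Finset.sum_apply]
      calc ENNReal.ofReal (6 / Real.pi ^ 2 * ((k : ℝ) ^ 2)⁻¹) *
            ((((A k).card : ℝ≥0∞))⁻¹ * ∑ t ∈ A k, (m k t) Set.univ)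
          = ENNReal.ofReal (6 / Real.pi ^ 2 * ((k : ℝ) ^ 2)⁻¹) *
            ((((A k).card : ℝ≥0∞))⁻¹ * ((A k).card : ℝ≥0∞)) := by
            rw [Finset.sum_congr rfl hPk]; simp
        _ ≤ ENNReal.ofReal (6 / Real.pi ^ 2 * ((k : ℝ) ^ 2)⁻¹) * 1 := by
            gcongr
            exact ENNReal.inv_mul_le_one _
        _ = _ := mul_one _
    have hfin : (∑' k : ℕ, ENNReal.ofReal (6 / Real.pi ^ 2 * ((k : ℝ) ^ 2)⁻¹)) ≠ ∞ := by
      rw [← ENNReal.ofReal_tsum_of_nonneg hwk_nonneg hsum]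
      exact ENNReal.ofReal_ne_top
    exact ne_top_of_le_ne_top hfin ((measure_mono (Set.subset_univ _)).trans huniv)
  -- the key lower bound in ℝ≥0∞
  have hkey : w * ((((Fintype.card X ^ n : ℕ) : ℝ≥0∞))⁻¹ * μ (cylSet s)) ≤ γ (cylSet s) := by
    have h1 : (ENNReal.ofReal (6 / Real.pi ^ 2 * ((n : ℝ) ^ 2)⁻¹) •
        (((A n).card : ℝ≥0∞)⁻¹ • ∑ t ∈ A n, m n t)) (cylSet s) ≤ γ (cylSet s) := by
      rw [hγ]
      exact (ENNReal.le_tsum n).trans (Measure.le_sum_apply _ _)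
    refine le_trans ?_ h1
    simp only [Measure.smul_apply, smul_eq_mul, Measure.coe_finset_sum, Finset.sum_apply]
    rw [← hw]
    gcongr
    · calc μ (cylSet s) ≤ (m n s) (cylSet s) := by
            exact (ENNReal.toReal_le_toReal (measure_ne_top μ _) (measure_ne_top _ _)).mp
              (hmax n s μ hμ)
        _ ≤ ∑ t ∈ A n, (m n t) (cylSet s) :=
            Finset.single_le_sum (f := fun t => (m n t) (cylSet s)) (fun t _ => zero_le) hsA
  -- convert to reals
  show _ ≤ (γ (cylSet s)).toReal
  rw [← ENNReal.ofReal_le_iff_le_toReal hγtop]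
  refine le_trans (le_of_eq ?_) hkey
  rw [mul_assoc, ENNReal.ofReal_mul hwnn, ← hw]
  congr 1
  rw [ENNReal.ofReal_mul (by positivity)]
  congr 1
  · rw [ENNReal.ofReal_inv_of_pos (by positivity), ENNReal.ofReal_pow (by positivity)]
    simp
  · exact ENNReal.ofReal_toReal (measure_ne_top μ _)
end
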